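/- Let F be an n×n real Metzler matrix (all off-diagonal entries nonnegative), let G be an n×s real matrix with nonnegative entries, let H be an r×n real matrix with nonnegative entries, and let λ be a real number. Then the following two statements are equivalent: (i) F is Hurwitz stable (every eigenvalue of F, viewed as a complex matrix, has negative real part) and every entry of the row vector −𝟙ᵣᵀ H F⁻¹ G is strictly less than λ; (ii) there exists a vector v ∈ ℝⁿ with all entries strictly positive such that every entry of the row vector vᵀ F + 𝟙ᵣᵀ H is strictly negative and every entry of the row vector vᵀ G is strictly less than λ. -/

import Mathlib

open Matrix

attribute [local instance] Matrix.linftyOpNormedAddCommGroup Matrix.linftyOpNormedRing Matrix.linftyOpNormedAlgebra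

lemma metzler_comparison {n : ℕ} {F : Matrix (Fin n) (Fin n) ℝ}
    (hM : ∀ i j, i ≠ j → 0 ≤ F i j) {v : Fin n → ℝ} (hv : ∀ i, 0 < v i)
    (hvF : ∀ j, (v ᵥ* F) j < 0) {y : Fin n → ℝ}
    (hy : ∀ j, 0 ≤ (y ᵥ* F) j) : ∀ i, y i ≤ 0 := by
  intro i
  have hne : (Finset.univ : Finset (Fin n)).Nonempty := ⟨i, Finset.mem_univ i⟩
  obtain ⟨i0, -, hi0⟩ := Finset.exists_max_image Finset.univ (fun k => y k / v k) hne
  set t := y i0 / v i0 with ht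
  have hle : ∀ k, y k ≤ t * v k := by
    intro k
    have := hi0 k (Finset.mem_univ k)
    calc y k = y k / v k * v k := (div_mul_cancel₀ _ (ne_of_gt (hv k))).symm
    _ ≤ t * v k := by
        exact mul_le_mul_of_nonneg_right this (le_of_lt (hv k))
  have heq : y i0 = t * v i0 := by rw [ht, div_mul_cancel₀ _ (ne_of_gt (hv i0))]
  have ht0 : t ≤ 0 := by
    by_contra h
    push_neg at h
    have hsum : (y ᵥ* F) i0 ≤ t * (v ᵥ* F) i0 := by
      rw [vecMul, vecMul]
      simp only [dotProduct, transpose_apply, Finset.mul_sum]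
      apply Finset.sum_le_sum
      intro k _
      rcases eq_or_ne k i0 with rfl | hk
      · rw [heq]; ring_nf; exact le_rfl
      · have := hM k i0 hk
        calc y k * F k i0 ≤ t * v k * F k i0 :=
              mul_le_mul_of_nonneg_right (hle k) this
        _ = t * (v k * F k i0) := by ring
    have : t * (v ᵥ* F) i0 < 0 := mul_neg_of_pos_of_neg h (hvF i0)
    exact absurd (lt_of_le_of_lt hsum this) (not_lt.2 (hy i0))
  calc y i ≤ t * v i := hle i
  _ ≤ 0 := mul_nonpos_of_nonpos_of_nonneg ht0 (le_of_lt (hv i))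
lemma matrix_mem_spectrum_iff_det {n : ℕ} (M : Matrix (Fin n) (Fin n) ℂ) (z : ℂ) :
    z ∈ spectrum ℂ M ↔ (z • (1 : Matrix (Fin n) (Fin n) ℂ) - M).det = 0 := by
  rw [spectrum.mem_iff, Algebra.algebraMap_eq_smul_one]
  constructor
  · intro h
    by_contra hd
    exact h ((Matrix.isUnit_iff_isUnit_det _).2 (isUnit_iff_ne_zero.2 hd))
  · intro h hu
    exact isUnit_iff_ne_zero.1 ((Matrix.isUnit_iff_isUnit_det _).1 hu) h

lemma matrix_spectrum_finite {n : ℕ} (M : Matrix (Fin n) (Fin n) ℂ) :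
    (spectrum ℂ M).Finite := by
  have hsub : spectrum ℂ M ⊆ {z | M.charpoly.IsRoot z} := by
    intro z hz
    rw [matrix_mem_spectrum_iff_det] at hz
    have h1 : M.charpoly.eval z = ((Polynomial.evalRingHom z).mapMatrix (charmatrix M)).det := by
      rw [Matrix.charpoly, ← RingHom.map_det]; rfl
    have hmap : (Polynomial.evalRingHom z).mapMatrix (charmatrix M)
        = z • (1 : Matrix (Fin n) (Fin n) ℂ) - M := by
      ext i j
      rcases eq_or_ne i j with rfl | hij
      · simp [charmatrix_apply_eq]
      · simp [charmatrix_apply_ne _ _ _ hij, Matrix.one_apply_ne hij]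
    simp only [Set.mem_setOf_eq, Polynomial.IsRoot]
    rw [h1, hmap, hz]
  exact Set.Finite.subset (Polynomial.finite_setOf_isRoot (Matrix.charpoly_monic M).ne_zero) hsub

lemma entry_nonneg_mul {n : ℕ} {A B : Matrix (Fin n) (Fin n) ℝ}
    (hA : ∀ i j, 0 ≤ A i j) (hB : ∀ i j, 0 ≤ B i j) : ∀ i j, 0 ≤ (A * B) i j := by
  intro i j
  rw [Matrix.mul_apply]
  exact Finset.sum_nonneg fun k _ => mul_nonneg (hA i k) (hB k j)

lemma entry_nonneg_pow {n : ℕ} {A : Matrix (Fin n) (Fin n) ℝ}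
    (hA : ∀ i j, 0 ≤ A i j) : ∀ (k : ℕ) (i j : Fin n), 0 ≤ (A ^ k) i j := by
  intro k
  induction k with
  | zero => intro i j; rcases eq_or_ne i j with rfl | hij
            · simp [pow_zero, Matrix.one_apply_eq]
            · simp [pow_zero, Matrix.one_apply_ne hij]
  | succ m ih => intro i j
                 rw [pow_succ]
                 exact entry_nonneg_mul ih hA i j

/-- A Metzler Hurwitz-stable matrix has an entrywise-nonpositive inverse. -/
lemma metzler_hurwitz_inv {n : ℕ} {F : Matrix (Fin n) (Fin n) ℝ}
    (hM : ∀ i j, i ≠ j → 0 ≤ F i j)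
    (hHur : ∀ z ∈ spectrum ℂ (F.map (Complex.ofReal ·)), z.re < 0) :
    IsUnit F.det ∧ ∀ i j, F⁻¹ i j ≤ 0 := by
  set Fc := F.map (Complex.ofReal ·) with hFcdef
  have hSfin := matrix_spectrum_finite Fc
  -- choose the scaling constant `c`
  set B : ℝ := 1 + (∑ w ∈ hSfin.toFinset, |‖w‖ ^ 2 / (-2 * w.re)|)
      + ∑ i, |F i i| with hB
  have hB1 : 1 ≤ B := by
    have h1 : 0 ≤ ∑ w ∈ hSfin.toFinset, |‖w‖ ^ 2 / (-2 * w.re)| :=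
      Finset.sum_nonneg fun w _ => abs_nonneg _
    have h2 : 0 ≤ ∑ i, |F i i| := Finset.sum_nonneg fun i _ => abs_nonneg _
    rw [hB]; linarith
  have hBpos : 0 < B := lt_of_lt_of_le one_pos hB1
  set c : ℝ := 1 / B with hc
  have hcpos : 0 < c := by positivity
  have hcB : c * B = 1 := by rw [hc, one_div, inv_mul_cancel₀ hBpos.ne']
  have hdiag : ∀ i, -F i i < B := by
    intro i
    have h1 : |F i i| ≤ ∑ j, |F j j| :=
      Finset.single_le_sum (fun j _ => abs_nonneg (F j j)) (Finset.mem_univ i)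
    have h2 : 0 ≤ ∑ w ∈ hSfin.toFinset, |‖w‖ ^ 2 / (-2 * w.re)| :=
      Finset.sum_nonneg fun w _ => abs_nonneg _
    have h3 := neg_abs_le (F i i)
    rw [hB]; linarith [abs_nonneg (F i i)]
  have hspecB : ∀ w ∈ spectrum ℂ Fc, ‖w‖ ^ 2 / (-2 * w.re) < B := by
    intro w hw
    have h1 : |‖w‖ ^ 2 / (-2 * w.re)|
        ≤ ∑ u ∈ hSfin.toFinset, |‖u‖ ^ 2 / (-2 * u.re)| :=
      Finset.single_le_sum (f := fun u => |‖u‖ ^ 2 / (-2 * u.re)|)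
        (fun u _ => abs_nonneg _) (hSfin.mem_toFinset.2 hw)
    have h2 : 0 ≤ ∑ i, |F i i| := Finset.sum_nonneg fun i _ => abs_nonneg _
    have h3 := le_abs_self (‖w‖ ^ 2 / (-2 * w.re))
    rw [hB]; linarith
  -- the nonnegative matrix `P`
  set P : Matrix (Fin n) (Fin n) ℝ := 1 + c • F with hP
  have hPnn : ∀ i j, 0 ≤ P i j := by
    intro i j
    rcases eq_or_ne i j with rfl | hij
    · have h1 := hdiag i
      have h2 : c * (-F i i) < c * B := by
        exact mul_lt_mul_of_pos_left h1 hcpos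
      rw [hcB] at h2
      simp only [hP, Matrix.add_apply, Matrix.smul_apply, Matrix.one_apply_eq, smul_eq_mul]
      nlinarith
    · have := hM i j hij
      simp only [hP, Matrix.add_apply, Matrix.smul_apply, Matrix.one_apply_ne hij,
        smul_eq_mul]
      positivity
  -- spectrum of `P` lies in the open unit disc
  set Pc := P.map (Complex.ofReal ·) with hPcdef
  have hPcEq : Pc = 1 + (c : ℂ) • Fc := by
    ext i j
    rcases eq_or_ne i j with rfl | hij
    · simp [hPcdef, hP, hFcdef, Matrix.map_apply, Matrix.one_apply_eq]
    · simp [hPcdef, hP, hFcdef, Matrix.map_apply, Matrix.one_apply_ne hij]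
  have hPspec : ∀ z ∈ spectrum ℂ Pc, ‖z‖ < 1 := by
    intro z hz
    rw [matrix_mem_spectrum_iff_det] at hz
    set w : ℂ := (z - 1) / (c : ℂ) with hw
    have hcne : (c : ℂ) ≠ 0 := by
      simpa using ne_of_gt hcpos
    have hzw : z = 1 + (c : ℂ) * w := by
      rw [hw, mul_comm, div_mul_cancel₀ _ hcne]; ring
    have hcw : (c : ℂ) * w = z - 1 := by
      rw [hw]; field_simp
    have hkey : z • (1 : Matrix (Fin n) (Fin n) ℂ) - Pc
        = (c : ℂ) • (w • (1 : Matrix (Fin n) (Fin n) ℂ) - Fc) := by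
      rw [hPcEq, smul_sub, smul_smul, hcw, sub_smul, one_smul]
      abel
    rw [hkey, Matrix.det_smul] at hz
    have hdet0 : (w • (1 : Matrix (Fin n) (Fin n) ℂ) - Fc).det = 0 := by
      have := pow_ne_zero (Fintype.card (Fin n)) hcne
      exact (mul_eq_zero.1 hz).resolve_left this
    have hwspec : w ∈ spectrum ℂ Fc := (matrix_mem_spectrum_iff_det Fc w).2 hdet0
    have hwre : w.re < 0 := hHur w hwspec
    have hwB := hspecB w hwspec
    -- numeric estimate
    have hre2 : 0 < -2 * w.re * B := by nlinarith
    have hineq : ‖w‖ ^ 2 < -2 * w.re * B := by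
      rw [div_lt_iff₀ (by nlinarith : (0:ℝ) < -2 * w.re)] at hwB
      nlinarith
    have habs2 : ‖z‖ ^ 2 < 1 := by
      rw [hzw]
      have : ‖1 + (c : ℂ) * w‖ ^ 2 = (1 + c * w.re)^2 + (c * w.im)^2 := by
        rw [Complex.sq_norm, Complex.normSq_apply]
        simp [Complex.add_re, Complex.add_im, Complex.mul_re, Complex.mul_im]
        ring
      rw [this]
      have habsw : ‖w‖ ^ 2 = w.re ^ 2 + w.im ^ 2 := by
        rw [Complex.sq_norm, Complex.normSq_apply]; ring
      rw [habsw] at hineq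
      have h3 : c * c * (w.re^2 + w.im^2) < c * c * (-2 * w.re * B) :=
        mul_lt_mul_of_pos_left hineq (mul_pos hcpos hcpos)
      have h4 : c * c * (-2 * w.re * B) = -2 * w.re * c * (c * B) := by ring
      rw [hcB, mul_one] at h4
      nlinarith [h3, h4]
    nlinarith [norm_nonneg z]
  -- spectral radius of `P` is less than one
  have hrad : spectralRadius ℂ Pc < 1 := by
    have hfin := matrix_spectrum_finite Pc
    rcases Set.eq_empty_or_nonempty (spectrum ℂ Pc) with hemp | hne
    · rw [spectralRadius, hemp]
      simp
    · have hfne : hfin.toFinset.Nonempty := by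
        rwa [Set.Finite.toFinset_nonempty]
      obtain ⟨z0, hz0mem, hz0max⟩ :=
        Finset.exists_max_image hfin.toFinset (fun z => ‖z‖₊) hfne
      have hle : spectralRadius ℂ Pc ≤ (‖z0‖₊ : ENNReal) := by
        rw [spectralRadius]
        exact iSup₂_le fun z hz =>
          ENNReal.coe_le_coe.2 (hz0max z (hfin.mem_toFinset.2 hz))
      have hlt : (‖z0‖₊ : ENNReal) < 1 := by
        rw [← ENNReal.coe_one, ENNReal.coe_lt_coe, ← NNReal.coe_lt_coe]
        simpa [coe_nnnorm] using
          hPspec z0 (hfin.mem_toFinset.1 hz0mem)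
      exact lt_of_le_of_lt hle hlt
  -- Gelfand's formula gives a power with small norm
  haveI : CompleteSpace (Matrix (Fin n) (Fin n) ℂ) := FiniteDimensional.complete ℂ _
  haveI : CompleteSpace (Matrix (Fin n) (Fin n) ℝ) := FiniteDimensional.complete ℝ _
  have hgel := spectrum.pow_nnnorm_pow_one_div_tendsto_nhds_spectralRadius Pc
  have hev : ∀ᶠ (k : ℕ) in Filter.atTop, ((‖Pc ^ k‖₊ : ENNReal) ^ (1/(k:ℝ))) < 1 :=
    hgel.eventually_lt_const hrad
  obtain ⟨N, hNlt, hN1⟩ := (hev.and (Filter.eventually_ge_atTop 1)).exists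
  have hQnorm : (‖Pc ^ N‖₊ : ENNReal) < 1 := by
    by_contra h
    push_neg at h
    have h2 : (1 : ENNReal) ≤ (‖Pc ^ N‖₊ : ENNReal) ^ (1/(N:ℝ)) := by
      rw [← ENNReal.one_rpow (1/(N:ℝ))]
      exact ENNReal.rpow_le_rpow h (by positivity)
    exact absurd (lt_of_le_of_lt h2 hNlt) (lt_irrefl _)
  have hmap_pow : Pc ^ N = (P ^ N).map (Complex.ofReal ·) := by
    have h1 : Pc = Complex.ofRealHom.mapMatrix P := rfl
    rw [h1, ← map_pow]
    rfl
  have hnorm_eq : ∀ M : Matrix (Fin n) (Fin n) ℝ, ‖M.map (Complex.ofReal ·)‖₊ = ‖M‖₊ := by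
    intro M
    rw [Matrix.linfty_opNNNorm_def, Matrix.linfty_opNNNorm_def]
    simp [Matrix.map_apply, Complex.nnnorm_real]
  have hQr : ‖P ^ N‖ < 1 := by
    rw [hmap_pow, ENNReal.coe_lt_one_iff, hnorm_eq] at hQnorm
    rw [← coe_nnnorm]
    exact_mod_cast hQnorm
  -- Neumann series
  set Q : Matrix (Fin n) (Fin n) ℝ := P ^ N with hQdef
  have hQnn : ∀ i j, 0 ≤ Q i j := entry_nonneg_pow hPnn N
  have hsum : Summable (fun k => Q ^ k) := summable_geometric_of_norm_lt_one hQr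
  set T : Matrix (Fin n) (Fin n) ℝ := ∑' k, Q ^ k with hTdef
  have hTQ : (1 - Q) * T = 1 := mul_neg_geom_series Q hQr
  have hTnn : ∀ i j, 0 ≤ T i j := by
    intro i j
    let e : Matrix (Fin n) (Fin n) ℝ →ₗ[ℝ] ℝ :=
      { toFun := fun M => M i j, map_add' := fun _ _ => rfl, map_smul' := fun _ _ => rfl }
    let E : Matrix (Fin n) (Fin n) ℝ →L[ℝ] ℝ := ⟨e, e.continuous_of_finiteDimensional⟩
    have h1 : T i j = ∑' k, (Q ^ k) i j := by
      have := E.map_tsum hsum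
      exact this
    rw [h1]
    exact tsum_nonneg fun k => entry_nonneg_pow hQnn k i j
  set Sg : Matrix (Fin n) (Fin n) ℝ := ∑ i ∈ Finset.range N, P ^ i with hSg
  have hSgnn : ∀ i j, 0 ≤ Sg i j := by
    intro i j
    rw [hSg]
    have h5 : (∑ k ∈ Finset.range N, P ^ k) i j = ∑ k ∈ Finset.range N, (P ^ k) i j := by
      rw [Matrix.sum_apply]
    rw [h5]
    exact Finset.sum_nonneg fun k _ => entry_nonneg_pow hPnn k i j
  have hSgeom : (1 - P) * Sg = 1 - Q := by
    have h1 := mul_geom_sum P N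
    rw [hSg, hQdef, ← neg_sub P 1, neg_mul, h1, neg_sub]
  have h1 : (1 - P) * (Sg * T) = 1 := by
    rw [← mul_assoc, hSgeom, hTQ]
  have h2 : (1 : Matrix (Fin n) (Fin n) ℝ) - P = -(c • F) := by
    rw [hP]; abel
  rw [h2, neg_mul] at h1
  have h3 : (c • F) * (Sg * T) = -1 := neg_eq_iff_eq_neg.1 h1
  set K : Matrix (Fin n) (Fin n) ℝ := c • (Sg * T) with hK
  have hKnn : ∀ i j, 0 ≤ K i j := by
    intro i j
    rw [hK]
    simp only [Matrix.smul_apply, smul_eq_mul]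
    exact mul_nonneg (le_of_lt hcpos) (entry_nonneg_mul hSgnn hTnn i j)
  have hFK : F * (-K) = 1 := by
    have h4 : F * K = -1 := by
      rw [hK, Matrix.mul_smul, ← Matrix.smul_mul, h3]
    rw [Matrix.mul_neg, h4, neg_neg]
  refine ⟨Matrix.isUnit_det_of_right_inverse hFK, fun i j => ?_⟩
  rw [Matrix.inv_eq_right_inv hFK]
  simpa using hKnn i j
lemma hurwitz_of_pos_vec {n : ℕ} {F : Matrix (Fin n) (Fin n) ℝ}
    (hM : ∀ i j, i ≠ j → 0 ≤ F i j) {v : Fin n → ℝ} (hv : ∀ i, 0 < v i)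
    (hvF : ∀ j, (v ᵥ* F) j < 0) :
    ∀ z ∈ spectrum ℂ (F.map (Complex.ofReal ·)), z.re < 0 := by
  intro z hz
  set Fc := F.map (Complex.ofReal ·) with hFc
  rw [matrix_mem_spectrum_iff_det] at hz
  obtain ⟨x, hx0, hx⟩ := (Matrix.exists_mulVec_eq_zero_iff).2 hz
  have hFx : Fc *ᵥ x = z • x := by
    have := hx
    rw [Matrix.sub_mulVec, Matrix.smul_mulVec, Matrix.one_mulVec, sub_eq_zero] at this
    exact this.symm
  -- the shift
  set α : ℝ := 1 + ∑ i, |F i i| with hα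
  have hαd : ∀ i, |F i i| < α := by
    intro i
    have h1 : |F i i| ≤ ∑ j, |F j j| :=
      Finset.single_le_sum (fun j _ => abs_nonneg (F j j)) (Finset.mem_univ i)
    linarith
  set A : Matrix (Fin n) (Fin n) ℝ := F + α • (1 : Matrix (Fin n) (Fin n) ℝ) with hA
  have hAnn : ∀ i j, 0 ≤ A i j := by
    intro i j
    rcases eq_or_ne i j with rfl | hij
    · have := hαd i
      simp only [hA, Matrix.add_apply, Matrix.smul_apply, Matrix.one_apply_eq, smul_eq_mul,
        mul_one]
      have := abs_lt.1 (hαd i)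
      linarith [this.1]
    · simpa [hA, Matrix.one_apply_ne hij] using hM i j hij
  set y : Fin n → ℝ := fun i => ‖x i‖ with hy
  have hynn : ∀ i, 0 ≤ y i := fun i => norm_nonneg _
  obtain ⟨j0, hj0⟩ : ∃ j, x j ≠ 0 := Function.ne_iff.1 hx0
  have hyj0 : 0 < y j0 := by simpa [hy] using norm_pos_iff.mpr hj0
  -- key pointwise bound
  have key1 : ∀ i, ‖z + (α : ℂ)‖ * y i ≤ ∑ j, A i j * y j := by
    intro i
    have h1 : (z + (α : ℂ)) * x i = ∑ j, (A i j : ℂ) * x j := by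
      have hsplit : ∀ j, (A i j : ℂ) = (F i j : ℂ) + (if i = j then (α : ℂ) else 0) := by
        intro j
        rcases eq_or_ne i j with rfl | hij
        · simp [hA]
        · simp [hA, Matrix.one_apply_ne hij, hij]
      rw [Finset.sum_congr rfl (fun j _ => by rw [hsplit j, add_mul])]
      rw [Finset.sum_add_distrib]
      have h2 : ∑ j, (if i = j then (α : ℂ) else 0) * x j = (α : ℂ) * x i := by
        rw [Finset.sum_congr rfl (fun j _ => by rw [ite_mul, zero_mul])]
        simp
      have h3 : ∑ j, (F i j : ℂ) * x j = z * x i := by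
        have := congrFun hFx i
        simpa [Matrix.mulVec, dotProduct, hFc, Matrix.map_apply] using this
      rw [h2, h3]; ring
    calc ‖z + (α : ℂ)‖ * y i = ‖(z + (α : ℂ)) * x i‖ := by
          rw [norm_mul]
    _ = ‖∑ j, (A i j : ℂ) * x j‖ := by rw [h1]
    _ ≤ ∑ j, ‖(A i j : ℂ) * x j‖ := norm_sum_le _ _
    _ = ∑ j, A i j * y j := by
          apply Finset.sum_congr rfl
          intro j _
          rw [norm_mul, Complex.norm_real, Real.norm_eq_abs, abs_of_nonneg (hAnn i j)]
  -- summation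
  have hvA : ∀ j, (v ᵥ* A) j = (v ᵥ* F) j + α * v j := by
    intro j
    have h1 : (v ᵥ* (α • (1 : Matrix (Fin n) (Fin n) ℝ))) j = α * v j := by
      simp [Matrix.vecMul, dotProduct, Matrix.one_apply, mul_comm,
        Finset.sum_ite_eq' (Finset.univ : Finset (Fin n)) j]
    simp [hA, Matrix.vecMul_add, h1, mul_comm]
  have hT : 0 < ∑ i, v i * y i := by
    apply Finset.sum_pos' (fun i _ => mul_nonneg (le_of_lt (hv i)) (hynn i))
    exact ⟨j0, Finset.mem_univ j0, mul_pos (hv j0) hyj0⟩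
  have main : ‖z + (α : ℂ)‖ * (∑ i, v i * y i) < α * (∑ i, v i * y i) := by
    calc ‖z + (α : ℂ)‖ * (∑ i, v i * y i)
        = ∑ i, v i * (‖z + (α : ℂ)‖ * y i) := by
          rw [Finset.mul_sum]; apply Finset.sum_congr rfl; intro i _; ring
    _ ≤ ∑ i, v i * (∑ j, A i j * y j) :=
          Finset.sum_le_sum fun i _ => mul_le_mul_of_nonneg_left (key1 i) (le_of_lt (hv i))
    _ = ∑ j, (v ᵥ* A) j * y j := by
          simp only [Matrix.vecMul, dotProduct, Finset.sum_mul, Finset.mul_sum]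
          rw [Finset.sum_comm]
          apply Finset.sum_congr rfl; intro i _
          apply Finset.sum_congr rfl; intro j _; ring
    _ < ∑ j, (α * v j) * y j := by
          apply Finset.sum_lt_sum
          · intro j _
            exact mul_le_mul_of_nonneg_right (by rw [hvA j]; linarith [hvF j]) (hynn j)
          · exact ⟨j0, Finset.mem_univ j0,
              (mul_lt_mul_of_pos_right (by rw [hvA j0]; linarith [hvF j0]) hyj0)⟩
    _ = α * (∑ i, v i * y i) := by
          rw [Finset.mul_sum]
          exact Finset.sum_congr rfl fun i _ => by ring
  have habs : ‖z + (α : ℂ)‖ < α := lt_of_mul_lt_mul_right main hT.le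
  have hre : z.re + α ≤ ‖z + (α : ℂ)‖ := by
    simpa using Complex.re_le_norm (z + (α : ℂ))
  linarith
namespace MetzlerAux

/-- The row vector `(1,…,1) ᵥ* H` of column sums of a nonnegative matrix is nonnegative. -/
lemma ones_vecMul_nonneg {r n : ℕ} {H : Matrix (Fin r) (Fin n) ℝ} (hH : ∀ i j, 0 ≤ H i j) :
    ∀ j, 0 ≤ (((fun _ : Fin r => (1 : ℝ)) ᵥ* H) j) := by
  intro j
  rw [Matrix.vecMul, dotProduct]
  exact Finset.sum_nonneg fun i _ => by simpa using hH i j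

end MetzlerAux

/-- Lemma 1 of the paper (Briat): for a Metzler matrix `F`, nonnegative `G`, `H` and a real
`λ`, Hurwitz stability of `F` together with the entrywise bound `-𝟙ᵣᵀ H F⁻¹ G < λ 𝟙ₛᵀ` is
equivalent to the existence of a positive vector `v` with `vᵀ F + 𝟙ᵣᵀ H < 0` and
`vᵀ G < λ 𝟙ₛᵀ`. -/
theorem metzler_hurwitz_iff_positive_vector
    (n r s : ℕ) (F : Matrix (Fin n) (Fin n) ℝ) (G : Matrix (Fin n) (Fin s) ℝ)
    (H : Matrix (Fin r) (Fin n) ℝ) (lam : ℝ)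
    (hMetzler : ∀ i j, i ≠ j → 0 ≤ F i j)
    (hG : ∀ i j, 0 ≤ G i j) (hH : ∀ i j, 0 ≤ H i j) :
    ((∀ z ∈ spectrum ℂ (F.map (Complex.ofReal ·)), z.re < 0) ∧
      (∀ j : Fin s, -(((((fun _ : Fin r => (1 : ℝ)) ᵥ* H) ᵥ* F⁻¹) ᵥ* G) j) < lam)) ↔
    (∃ v : Fin n → ℝ, (∀ i, 0 < v i) ∧
      (∀ j : Fin n, (v ᵥ* F) j + ((fun _ : Fin r => (1 : ℝ)) ᵥ* H) j < 0) ∧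
      (∀ j : Fin s, (v ᵥ* G) j < lam)) := by
  set c : Fin n → ℝ := (fun _ : Fin r => (1 : ℝ)) ᵥ* H with hcdef
  have hcnn : ∀ j, 0 ≤ c j := MetzlerAux.ones_vecMul_nonneg hH
  constructor
  · rintro ⟨hHur, hbound⟩
    obtain ⟨hdetU, hinv⟩ := metzler_hurwitz_inv hMetzler hHur
    set K : Matrix (Fin n) (Fin n) ℝ := -F⁻¹ with hKdef
    have hKnn : ∀ i j, 0 ≤ K i j := fun i j => by
      rw [hKdef]
      simpa using hinv i j
    have hKdet : K.det ≠ 0 := by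
      rw [hKdef, Matrix.det_neg]
      have h1 : F⁻¹.det ≠ 0 := by
        rw [Matrix.det_nonsing_inv, Ring.inverse_eq_inv']
        exact inv_ne_zero hdetU.ne_zero
      exact mul_ne_zero (pow_ne_zero _ (neg_ne_zero.2 one_ne_zero)) h1
    have hcol : ∀ i, ∃ j0, 0 < K j0 i := by
      intro i
      by_contra h
      push_neg at h
      apply hKdet
      apply Matrix.det_eq_zero_of_column_eq_zero i
      intro j0
      exact le_antisymm (h j0) (hKnn j0 i)
    set bb : Fin s → ℝ := ((fun _ : Fin n => (1 : ℝ)) ᵥ* K) ᵥ* G with hbb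
    set a : Fin s → ℝ := fun j => -(((c ᵥ* F⁻¹) ᵥ* G) j) with ha
    have hab : ∀ j, a j < lam := hbound
    obtain ⟨ε, hε0, hεs⟩ : ∃ ε > 0, ∀ j, a j + ε * bb j < lam := by
      rcases isEmpty_or_nonempty (Fin s) with hs | hs
      · exact ⟨1, one_pos, fun j => isEmptyElim j⟩
      · have hne : (Finset.univ : Finset (Fin s)).Nonempty := Finset.univ_nonempty
        set g : Fin s → ℝ := fun j => (lam - a j) / (1 + |bb j|) with hg
        have hgpos : ∀ j, 0 < g j := fun j =>
          div_pos (by linarith [hab j]) (by positivity)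
        obtain ⟨j1, hj1mem, hj1⟩ := Finset.exists_min_image Finset.univ g hne
        refine ⟨g j1, hgpos j1, fun j => ?_⟩
        have h1 : g j1 ≤ g j := hj1 j (Finset.mem_univ j)
        have h2 : g j1 * bb j ≤ g j1 * |bb j| :=
          mul_le_mul_of_nonneg_left (le_abs_self _) (le_of_lt (hgpos j1))
        have h3 : g j1 * |bb j| < g j1 * (1 + |bb j|) :=
          mul_lt_mul_of_pos_left (by linarith [abs_nonneg (bb j)]) (hgpos j1)
        have h4 : g j1 * (1 + |bb j|) ≤ g j * (1 + |bb j|) :=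
          mul_le_mul_of_nonneg_right h1 (by positivity)
        have h5 : g j * (1 + |bb j|) = lam - a j := by
          rw [hg]
          field_simp
        linarith
    refine ⟨(fun jj => c jj + ε) ᵥ* K, ?_, ?_, ?_⟩
    · intro i
      obtain ⟨j0, hj0⟩ := hcol i
      rw [Matrix.vecMul, dotProduct]
      apply Finset.sum_pos'
      · intro k _
        exact mul_nonneg (add_nonneg (hcnn k) hε0.le) (hKnn k i)
      · refine ⟨j0, Finset.mem_univ _, mul_pos ?_ hj0⟩
        have := hcnn j0
        linarith
    · intro j
      have hKF : K * F = -1 := by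
        rw [hKdef, Matrix.neg_mul, Matrix.nonsing_inv_mul F hdetU]
      have hvF : ((fun jj => c jj + ε) ᵥ* K) ᵥ* F = -(fun jj => c jj + ε) := by
        rw [Matrix.vecMul_vecMul, hKF, Matrix.vecMul_neg, Matrix.vecMul_one]
      have h := congrFun hvF j
      rw [h]
      simp only [Pi.neg_apply]
      linarith [hε0]
    · intro j
      have hsplit : (fun jj => c jj + ε) = c + (fun _ : Fin n => ε • (1 : ℝ)) := by
        funext jj
        simp
      have hεvec : (fun _ : Fin n => ε • (1 : ℝ)) = ε • (fun _ : Fin n => (1 : ℝ)) := rfl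
      have hcomp : ((fun jj => c jj + ε) ᵥ* K) ᵥ* G
          = (c ᵥ* K) ᵥ* G + ε • (((fun _ : Fin n => (1 : ℝ)) ᵥ* K) ᵥ* G) := by
        rw [hsplit, Matrix.add_vecMul, Matrix.add_vecMul, hεvec, Matrix.smul_vecMul,
          Matrix.smul_vecMul]
      have hcK : (c ᵥ* K) ᵥ* G = -((c ᵥ* F⁻¹) ᵥ* G) := by
        rw [hKdef, Matrix.vecMul_neg, Matrix.neg_vecMul]
      have h := congrFun hcomp j
      rw [h]
      have h2 : ((c ᵥ* K) ᵥ* G) j = a j := by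
        rw [hcK, ha]
        simp
      rw [Pi.add_apply, h2]
      have h3 : (ε • (((fun _ : Fin n => (1 : ℝ)) ᵥ* K) ᵥ* G)) j = ε * bb j := by
        rw [hbb]
        simp
      rw [h3]
      exact hεs j
  · rintro ⟨v, hv, h1, h2⟩
    have hvF : ∀ j, (v ᵥ* F) j < 0 := fun j => by
      have := h1 j; have := hcnn j; linarith
    have hHur := hurwitz_of_pos_vec hMetzler hv hvF
    have hdet : F.det ≠ 0 := by
      intro h0
      obtain ⟨y, hy0, hyF⟩ := (Matrix.exists_vecMul_eq_zero_iff).2 h0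
      have hyle : ∀ i, y i ≤ 0 :=
        metzler_comparison hMetzler hv hvF (fun j => le_of_eq (congrFun hyF j).symm)
      have hyge : ∀ i, (-y) i ≤ 0 := by
        refine metzler_comparison hMetzler hv hvF (fun j => ?_)
        rw [Matrix.neg_vecMul, hyF]
        simp
      apply hy0
      funext i
      have := hyle i
      have h2 := hyge i
      simp only [Pi.neg_apply, neg_nonpos] at h2
      exact le_antisymm this h2
    refine ⟨hHur, fun j => ?_⟩
    set w : Fin n → ℝ := c ᵥ* F⁻¹ with hwdef
    have hwF : w ᵥ* F = c := by
      rw [hwdef, Matrix.vecMul_vecMul, Matrix.nonsing_inv_mul F (isUnit_iff_ne_zero.2 hdet),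
        Matrix.vecMul_one]
    have hyF : ∀ j, 0 ≤ (((fun i => -v i - w i) ᵥ* F)) j := by
      intro j
      have hsplit : (fun i => -v i - w i) = -(v + w) := by funext i; simp; ring
      rw [hsplit, Matrix.neg_vecMul, Matrix.add_vecMul, hwF]
      simp only [Pi.neg_apply, Pi.add_apply]
      have := h1 j
      linarith
    have hle : ∀ i, -w i ≤ v i := by
      intro i
      have := metzler_comparison hMetzler hv hvF hyF i
      simpa using by linarith [this]
    have hsum : -((w ᵥ* G) j) ≤ (v ᵥ* G) j := by
      rw [Matrix.vecMul, Matrix.vecMul, dotProduct, dotProduct, ← Finset.sum_neg_distrib]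
      refine Finset.sum_le_sum fun i _ => ?_
      rw [neg_mul_eq_neg_mul]
      exact mul_le_mul_of_nonneg_right (hle i) (hG i j)
    calc -((c ᵥ* F⁻¹ ᵥ* G) j) = -((w ᵥ* G) j) := by rw [hwdef]
    _ ≤ (v ᵥ* G) j := hsum
    _ < lam := h2 j
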